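/- Let G = N ⋊ T with 𝒦_2 = Λ_1·I(T) = I(N)I(T) and 𝒦_3 = Λ_2·I(T) + Λ_1·I(T)^2. Then 𝒦_2/𝒦_3 ≅ (N/N_{(2)}) ⊗ (T/T_2), naturally, where N_{(2)} = [N,G] and T_2 = [T,T]; the isomorphism sends (nN_{(2)}) ⊗ (tT_2) to the class of (n−1)(t−1). -/

import Mathlib

open MonoidAlgebra TensorProduct

/-- The ℤ-submodule of `ℤ[G]` generated by the elements `h - 1`, `h ∈ H`. -/
noncomputable def relAug (G : Type*) [Group G] (H : Subgroup G) :
    Submodule ℤ (MonoidAlgebra ℤ G) :=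
  Submodule.span ℤ {x | ∃ h ∈ H, x = MonoidAlgebra.of ℤ G h - 1}

/-- The filtration ideal `I_𝒢^n(G) ⊆ ℤ[G]` associated to an N-series `Gs`. -/
noncomputable def nIdeal (G : Type*) [Group G] (Gs : ℕ → Subgroup G) (n : ℕ) :
    Submodule ℤ (MonoidAlgebra ℤ G) :=
  Submodule.span ℤ
    {x | ∃ l : List (ℕ × G), l ≠ [] ∧ (∀ p ∈ l, 1 ≤ p.1 ∧ p.2 ∈ Gs p.1) ∧
      n ≤ (l.map Prod.fst).sum ∧
      x = (l.map fun p => MonoidAlgebra.of ℤ G p.2 - 1).prod}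

section Aux
variable {G : Type*} [Group G]

lemma mem_relAug {H : Subgroup G} {h : G} (hh : h ∈ H) :
    MonoidAlgebra.of ℤ G h - 1 ∈ relAug G H :=
  Submodule.subset_span ⟨h, hh, rfl⟩

lemma mul_mem_sq {H : Subgroup G} {x y : MonoidAlgebra ℤ G} (hx : x ∈ relAug G H)
    (hy : y ∈ relAug G H) : x * y ∈ (relAug G H) ^ 2 := by
  rw [pow_two]; exact Submodule.mul_mem_mul hx hy

lemma relAug_mul_of {H : Subgroup G} {x : MonoidAlgebra ℤ G} (hx : x ∈ relAug G H)
    {h : G} (hh : h ∈ H) : x * MonoidAlgebra.of ℤ G h ∈ relAug G H := by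
  simp only [relAug] at hx ⊢
  induction hx using Submodule.span_induction with
  | mem y hy =>
      obtain ⟨h', hh', rfl⟩ := hy
      have e : (MonoidAlgebra.of ℤ G h' - 1) * MonoidAlgebra.of ℤ G h
          = (MonoidAlgebra.of ℤ G (h' * h) - 1) - (MonoidAlgebra.of ℤ G h - 1) := by
        rw [map_mul]; noncomm_ring
      rw [e]
      exact sub_mem (Submodule.subset_span ⟨h' * h, H.mul_mem hh' hh, rfl⟩)
        (Submodule.subset_span ⟨h, hh, rfl⟩)
  | zero => simpa using Submodule.zero_mem _
  | add x y _ _ hx hy => rw [add_mul]; exact add_mem hx hy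
  | smul a x _ hx => rw [smul_mul_assoc]; exact Submodule.smul_mem _ _ hx

lemma relAug_sq_mul_of {H : Subgroup G} {x : MonoidAlgebra ℤ G} (hx : x ∈ (relAug G H) ^ 2)
    {h : G} (hh : h ∈ H) : x * MonoidAlgebra.of ℤ G h ∈ (relAug G H) ^ 2 := by
  rw [pow_two] at hx ⊢
  exact Submodule.mul_induction_on hx
    (fun m hm n hn => by
      rw [mul_assoc]; exact Submodule.mul_mem_mul hm (relAug_mul_of hn hh))
    (fun a b ha hb => by rw [add_mul]; exact add_mem ha hb)

open scoped commutatorElement in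
lemma commutator_sub_one_mem_sq (H : Subgroup G) {c : G} (hc : c ∈ ⁅H, H⁆) :
    MonoidAlgebra.of ℤ G c - 1 ∈ (relAug G H) ^ 2 := by
  let K : Subgroup G :=
    { carrier := {g | g ∈ H ∧ MonoidAlgebra.of ℤ G g - 1 ∈ (relAug G H) ^ 2}
      mul_mem' := by
        rintro a b ⟨ha, ha2⟩ ⟨hb, hb2⟩
        refine ⟨H.mul_mem ha hb, ?_⟩
        have e : MonoidAlgebra.of ℤ G (a * b) - 1 =
            (MonoidAlgebra.of ℤ G a - 1) * (MonoidAlgebra.of ℤ G b - 1) +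
            (MonoidAlgebra.of ℤ G a - 1) + (MonoidAlgebra.of ℤ G b - 1) := by
          rw [map_mul]; noncomm_ring
        rw [e]
        exact add_mem (add_mem (mul_mem_sq (mem_relAug ha) (mem_relAug hb)) ha2) hb2
      one_mem' := by
        refine ⟨H.one_mem, ?_⟩
        rw [map_one, sub_self]
        exact Submodule.zero_mem _
      inv_mem' := by
        rintro a ⟨ha, ha2⟩
        refine ⟨H.inv_mem ha, ?_⟩
        have h1 : MonoidAlgebra.of ℤ G a⁻¹ * MonoidAlgebra.of ℤ G a = 1 := by
          rw [← map_mul, inv_mul_cancel, map_one]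
        have e : MonoidAlgebra.of ℤ G a⁻¹ - 1 =
            -((MonoidAlgebra.of ℤ G a⁻¹ - 1) * (MonoidAlgebra.of ℤ G a - 1)) -
            (MonoidAlgebra.of ℤ G a - 1) := by
          rw [sub_mul, mul_sub, h1]; noncomm_ring
        rw [e]
        exact sub_mem (neg_mem (mul_mem_sq (mem_relAug (H.inv_mem ha)) (mem_relAug ha))) ha2 }
  have hle : ⁅H, H⁆ ≤ K := by
    rw [Subgroup.commutator_le]
    intro g₁ hg₁ g₂ hg₂
    refine ⟨by { show ⁅g₁, g₂⁆ ∈ H; rw [commutatorElement_def]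
                 exact H.mul_mem (H.mul_mem (H.mul_mem hg₁ hg₂) (H.inv_mem hg₁)) (H.inv_mem hg₂) },
            ?_⟩
    have e1 : MonoidAlgebra.of ℤ G ⁅g₁, g₂⁆ - 1 =
        (MonoidAlgebra.of ℤ G (g₁ * g₂) - MonoidAlgebra.of ℤ G (g₂ * g₁)) *
          MonoidAlgebra.of ℤ G (g₂ * g₁)⁻¹ := by
      rw [sub_mul, ← map_mul, ← map_mul, mul_inv_cancel, map_one,
        show g₁ * g₂ * (g₂ * g₁)⁻¹ = ⁅g₁, g₂⁆ from by group]
    have e2 : MonoidAlgebra.of ℤ G (g₁ * g₂) - MonoidAlgebra.of ℤ G (g₂ * g₁) =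
        (MonoidAlgebra.of ℤ G g₁ - 1) * (MonoidAlgebra.of ℤ G g₂ - 1) -
        (MonoidAlgebra.of ℤ G g₂ - 1) * (MonoidAlgebra.of ℤ G g₁ - 1) := by
      rw [map_mul, map_mul]; noncomm_ring
    rw [e1, e2]
    exact relAug_sq_mul_of (by
      rw [pow_two]
      exact sub_mem (Submodule.mul_mem_mul (mem_relAug hg₁) (mem_relAug hg₂))
        (Submodule.mul_mem_mul (mem_relAug hg₂) (mem_relAug hg₁)))
      (H.inv_mem (H.mul_mem hg₂ hg₁))
  exact (hle hc).2

lemma mem_nIdeal_single {Ns : ℕ → Subgroup G} {k : ℕ} (hk : 2 ≤ k) {a : G} (ha : a ∈ Ns k) :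
    MonoidAlgebra.of ℤ G a - 1 ∈ nIdeal G Ns 2 := by
  refine Submodule.subset_span ⟨[(k, a)], by simp, ?_, by simpa using hk, by simp⟩
  rintro p hp
  simp only [List.mem_singleton] at hp
  subst hp
  exact ⟨by omega, ha⟩

lemma mem_nIdeal_pair {Ns : ℕ → Subgroup G} {k₁ k₂ : ℕ} (h₁ : 1 ≤ k₁) (h₂ : 1 ≤ k₂)
    {a b : G} (ha : a ∈ Ns k₁) (hb : b ∈ Ns k₂) :
    (MonoidAlgebra.of ℤ G a - 1) * (MonoidAlgebra.of ℤ G b - 1) ∈ nIdeal G Ns 2 := by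
  refine Submodule.subset_span ⟨[(k₁, a), (k₂, b)], by simp, ?_, by simp; omega, by simp⟩
  rintro p hp
  rcases List.mem_pair.mp hp with h | h <;> subst h
  · exact ⟨h₁, ha⟩
  · exact ⟨h₂, hb⟩

end Aux

open Pointwise
set_option maxHeartbeats 2000000

/-- `𝒦₂ = Λ₁·I(T) = I(N)·I(T)`. -/
noncomputable def K2 (G : Type*) [Group G] (N T : Subgroup G) :
    Submodule ℤ (MonoidAlgebra ℤ G) :=
  relAug G N * relAug G T

/-- `𝒦₃ = Λ₂·I(T) + Λ₁·I(T)²`, with `Λ₂ = I_𝒩²(N)` for the N-series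
`N_{(1)} = N`, `N_{(i+1)} = [N_{(i)}, G]`. -/
noncomputable def K3 (G : Type*) [Group G] (N T : Subgroup G) (Ns : ℕ → Subgroup G) :
    Submodule ℤ (MonoidAlgebra ℤ G) :=
  nIdeal G Ns 2 * relAug G T ⊔ relAug G N * (relAug G T) ^ 2

/-- for `G = N ⋊ T`, `𝒦₂/𝒦₃ ≅ (N/N_{(2)}) ⊗ (T/T₂)` naturally, the
isomorphism sending `(nN_{(2)}) ⊗ (tT₂)` to the class of `(n−1)(t−1)`.  Here `A`
realizes `N^{AB} = N/N_{(2)} = N/[N,G]` via the surjection `α` with kernel `[N,G]`, and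
`Tb` realizes `T^{ab} = T/[T,T]` via `β`. -/
theorem stmt19 {G A Tb : Type*} [Group G] [AddCommGroup A] [AddCommGroup Tb]
    (N T : Subgroup G) [N.Normal] (hdisj : N ⊓ T = ⊥) (hjoin : N ⊔ T = ⊤)
    (Ns : ℕ → Subgroup G) (hNs1 : Ns 1 = N)
    (hNsrec : ∀ i, 1 ≤ i → Ns (i + 1) = ⁅Ns i, (⊤ : Subgroup G)⁆)
    (α : ↥N → A) (hαadd : ∀ a b : ↥N, α (a * b) = α a + α b)
    (hαsurj : Function.Surjective α)
    (hαker : ∀ a : ↥N, α a = 0 ↔ (a : G) ∈ ⁅N, (⊤ : Subgroup G)⁆)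
    (β : ↥T → Tb) (hβadd : ∀ a b : ↥T, β (a * b) = β a + β b)
    (hβsurj : Function.Surjective β)
    (hβker : ∀ t : ↥T, β t = 0 ↔ (t : G) ∈ ⁅T, T⁆) :
    ∃ e : (A ⊗[ℤ] Tb) ≃ₗ[ℤ]
        (↥(K2 G N T) ⧸ (K3 G N T Ns).comap (K2 G N T).subtype),
      ∀ (x : ↥N) (t : ↥T)
        (hm : (MonoidAlgebra.of ℤ G (x : G) - 1) * (MonoidAlgebra.of ℤ G (t : G) - 1) ∈
          K2 G N T),
        e (α x ⊗ₜ[ℤ] β t) = Submodule.Quotient.mk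
          (⟨(MonoidAlgebra.of ℤ G (x : G) - 1) * (MonoidAlgebra.of ℤ G (t : G) - 1), hm⟩ :
            ↥(K2 G N T)) := by
  classical
  -- basic facts about α and β
  have hα1 : α 1 = 0 := by
    apply add_left_cancel (a := α 1); rw [add_zero, ← hαadd, mul_one]
  have hβ1 : β 1 = 0 := by
    apply add_left_cancel (a := β 1); rw [add_zero, ← hβadd, mul_one]
  have hαinv : ∀ n : ↥N, α n⁻¹ = - α n := fun n =>
    eq_neg_of_add_eq_zero_left (by rw [← hαadd, inv_mul_cancel, hα1])
  have hβinv : ∀ t : ↥T, β t⁻¹ = - β t := fun t =>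
    eq_neg_of_add_eq_zero_left (by rw [← hβadd, inv_mul_cancel, hβ1])
  -- facts about the N-series
  have hNsN : ∀ k, 1 ≤ k → Ns k ≤ N ∧ (Ns k).Normal := by
    intro k hk
    induction k with
    | zero => omega
    | succ n ih =>
      rcases Nat.lt_or_ge n 1 with h | h
      · interval_cases n
        rw [hNs1]; exact ⟨le_rfl, inferInstance⟩
      · obtain ⟨hle, hnorm⟩ := ih h
        rw [hNsrec n h]
        haveI := hnorm
        exact ⟨le_trans (Subgroup.commutator_le_left _ _) hle, Subgroup.commutator_normal _ _⟩
  have hNs2 : Ns 2 = ⁅N, (⊤ : Subgroup G)⁆ := by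
    have := hNsrec 1 le_rfl; rw [hNs1] at this; exact this
  have hNsle2 : ∀ k, 2 ≤ k → Ns k ≤ Ns 2 := by
    intro k hk
    induction k with
    | zero => omega
    | succ n ih =>
      rcases Nat.lt_or_ge n 2 with h | h
      · have : n = 1 := by omega
        subst this
        exact le_rfl
      · have h1 : 1 ≤ n := by omega
        haveI := (hNsN n h1).2
        rw [hNsrec n h1]
        exact le_trans (Subgroup.commutator_le_left _ _) (ih h)
  -- decomposition G = N * T
  have hdec : ∀ g : G, ∃ (n : ↥N) (t : ↥T), g = (n : G) * (t : G) := by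
    intro g
    have hg : g ∈ ((N : Set G) * (T : Set G) : Set G) := by
      rw [← Subgroup.normal_mul, hjoin]; trivial
    obtain ⟨n, hn, t, ht, rfl⟩ := hg
    exact ⟨⟨n, hn⟩, ⟨t, ht⟩, rfl⟩
  choose nP tP hP using hdec
  have huniq : ∀ (n : ↥N) (t : ↥T), nP ((n : G) * t) = n ∧ tP ((n : G) * t) = t := by
    intro n t
    have h := hP ((n : G) * t)
    have e : ((nP ((n : G) * t) : G))⁻¹ * (n : G) = (tP ((n : G) * t) : G) * (t : G)⁻¹ := by
      calc ((nP ((n : G) * t) : G))⁻¹ * (n : G)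
          = ((nP ((n : G) * t) : G))⁻¹ * ((n : G) * t) * (t : G)⁻¹ := by group
        _ = ((nP ((n : G) * t) : G))⁻¹ *
            (((nP ((n : G) * t)) : G) * (tP ((n : G) * t) : G)) * (t : G)⁻¹ := by rw [← h]
        _ = (tP ((n : G) * t) : G) * (t : G)⁻¹ := by group
    have emem : ((nP ((n : G) * t) : G))⁻¹ * (n : G) ∈ N ⊓ T := by
      constructor
      · exact N.mul_mem (N.inv_mem (nP _).2) n.2
      · rw [e]; exact T.mul_mem (tP _).2 (T.inv_mem t.2)
    rw [hdisj, Subgroup.mem_bot] at emem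
    have h1 : nP ((n : G) * t) = n := by
      ext; exact inv_mul_eq_one.mp emem
    have h2 : tP ((n : G) * t) = t := by
      ext
      have e2 : (tP ((n : G) * t) : G) * (t : G)⁻¹ = 1 := by rw [← e, emem]
      exact mul_inv_eq_one.mp e2
    exact ⟨h1, h2⟩
  have hnP_n : ∀ n : ↥N, nP (n : G) = n := fun n => by
    have := (huniq n 1).1; simpa using this
  have htP_n : ∀ n : ↥N, tP (n : G) = 1 := fun n => by
    have := (huniq n 1).2; simpa using this
  have htP_t : ∀ t : ↥T, tP (t : G) = t := fun t => by
    have := (huniq 1 t).2; simpa using this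
  have hmulN : ∀ (a : ↥N) (g : G), nP ((a : G) * g) = a * nP g ∧ tP ((a : G) * g) = tP g := by
    intro a g
    have h1 : (a : G) * g = ((a * nP g : ↥N) : G) * (tP g : G) := by
      rw [Subgroup.coe_mul, mul_assoc, ← hP g]
    rw [h1]
    exact ⟨(huniq _ _).1, (huniq _ _).2⟩
  -- the linear maps Ψ and βT
  let ΨF : G → A ⊗[ℤ] Tb := fun g => α (nP g) ⊗ₜ[ℤ] β (tP g)
  let Ψ : MonoidAlgebra ℤ G →ₗ[ℤ] A ⊗[ℤ] Tb := Finsupp.linearCombination ℤ ΨF ∘ₗ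
    (MonoidAlgebra.coeffLinearEquiv ℤ).toLinearMap
  let βT : MonoidAlgebra ℤ G →ₗ[ℤ] Tb := Finsupp.linearCombination ℤ (fun g => β (tP g)) ∘ₗ
    (MonoidAlgebra.coeffLinearEquiv ℤ).toLinearMap
  have hΨof : ∀ g : G, Ψ (MonoidAlgebra.of ℤ G g) = α (nP g) ⊗ₜ[ℤ] β (tP g) := by
    intro g
    show Finsupp.linearCombination ℤ ΨF (Finsupp.single g 1) = _
    rw [Finsupp.linearCombination_single, one_smul]
  have hβTof : ∀ g : G, βT (MonoidAlgebra.of ℤ G g) = β (tP g) := by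
    intro g
    show Finsupp.linearCombination ℤ (fun g => β (tP g)) (Finsupp.single g 1) = _
    rw [Finsupp.linearCombination_single, one_smul]
  have hone : (1 : MonoidAlgebra ℤ G) = MonoidAlgebra.of ℤ G 1 := by rw [map_one]
  -- key computation lemmas
  have L2 : ∀ (a : ↥N) (v : MonoidAlgebra ℤ G),
      βT ((MonoidAlgebra.of ℤ G (a : G) - 1) * v) = 0 := by
    intro a v
    induction v using MonoidAlgebra.induction_on with
    | of g =>
      rw [sub_mul, one_mul, ← map_mul, map_sub, hβTof, hβTof, (hmulN a g).2, sub_self]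
    | add f g hf hg =>
      rw [mul_add, map_add, hf, hg, add_zero]
    | smul r f hf =>
      rw [mul_smul_comm, map_smul, hf, smul_zero]
  have L1 : ∀ (a : ↥N) (v : MonoidAlgebra ℤ G),
      Ψ ((MonoidAlgebra.of ℤ G (a : G) - 1) * v) = α a ⊗ₜ[ℤ] βT v := by
    intro a v
    induction v using MonoidAlgebra.induction_on with
    | of g =>
      rw [sub_mul, one_mul, ← map_mul, map_sub, hΨof, hΨof, hβTof,
        (hmulN a g).1, (hmulN a g).2, hαadd, add_tmul]
      abel
    | add f g hf hg =>
      rw [mul_add, map_add, hf, hg, map_add, tmul_add]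
    | smul r f hf =>
      rw [mul_smul_comm, map_smul, hf, map_smul, tmul_smul]
  have hβT_relT : ∀ t : ↥T, βT (MonoidAlgebra.of ℤ G (t : G) - 1) = β t := by
    intro t
    rw [map_sub, hβTof, htP_t, hone, hβTof]
    have h1 : tP ((1 : G)) = 1 := by
      have := htP_n 1; simpa using this
    rw [h1, hβ1, sub_zero]
  have hβT_mul : ∀ (t : ↥T) (v : MonoidAlgebra ℤ G), v ∈ relAug G T →
      βT ((MonoidAlgebra.of ℤ G (t : G) - 1) * v) = 0 := by
    intro t v hv
    simp only [relAug] at hv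
    induction hv using Submodule.span_induction with
    | mem y hy =>
      obtain ⟨t', ht', rfl⟩ := hy
      have e : (MonoidAlgebra.of ℤ G (t : G) - 1) * (MonoidAlgebra.of ℤ G t' - 1) =
          (MonoidAlgebra.of ℤ G ((t : G) * t') - 1) - (MonoidAlgebra.of ℤ G (t : G) - 1) -
          (MonoidAlgebra.of ℤ G t' - 1) := by
        rw [map_mul]; noncomm_ring
      rw [e, map_sub, map_sub,
        show ((t : G) * t') = ((t * ⟨t', ht'⟩ : ↥T) : G) from rfl]
      show βT (MonoidAlgebra.of ℤ G ((t * ⟨t', ht'⟩ : ↥T) : G) - 1) -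
        βT (MonoidAlgebra.of ℤ G (t : G) - 1) -
        βT (MonoidAlgebra.of ℤ G ((⟨t', ht'⟩ : ↥T) : G) - 1) = 0
      rw [hβT_relT (t * ⟨t', ht'⟩), hβT_relT t, hβT_relT (⟨t', ht'⟩ : ↥T), hβadd]
      abel
    | zero => rw [mul_zero, map_zero]
    | add x y _ _ hx hy => rw [mul_add, map_add, hx, hy, add_zero]
    | smul c x _ hx => rw [mul_smul_comm, map_smul, hx, smul_zero]
  have hβTsq : ∀ v ∈ (relAug G T) ^ 2, βT v = 0 := by
    intro v hv
    rw [pow_two] at hv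
    refine Submodule.mul_induction_on hv ?_ ?_
    · intro m hm n hn
      have hm' := hm
      simp only [relAug] at hm'
      clear hm
      induction hm' using Submodule.span_induction with
      | mem y hy =>
        obtain ⟨t', ht', rfl⟩ := hy
        exact hβT_mul ⟨t', ht'⟩ n hn
      | zero => rw [zero_mul, map_zero]
      | add x y _ _ hx hy => rw [add_mul, map_add, hx, hy, add_zero]
      | smul c x _ hx => rw [smul_mul_assoc, map_smul, hx, smul_zero]
    · intro x y hx hy
      rw [map_add, hx, hy, add_zero]
  -- Ψ kills (nIdeal 2) * anything
  have hΨnI : ∀ v ∈ nIdeal G Ns 2, ∀ w : MonoidAlgebra ℤ G, Ψ (v * w) = 0 := by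
    intro v hv
    simp only [nIdeal] at hv
    induction hv using Submodule.span_induction with
    | mem x hx =>
      obtain ⟨l, hne, hmem, hsum, rfl⟩ := hx
      intro w
      rcases l with _ | ⟨p, l'⟩
      · exact absurd rfl hne
      rcases l' with _ | ⟨p', r⟩
      · simp only [List.map_cons, List.map_nil, List.prod_cons, List.prod_nil, mul_one,
          List.sum_cons, List.sum_nil, add_zero] at hsum ⊢
        have hp := hmem p (by simp)
        have haN : p.2 ∈ N := (hNsN p.1 hp.1).1 hp.2
        rw [show p.2 = ((⟨p.2, haN⟩ : ↥N) : G) from rfl, L1 ⟨p.2, haN⟩ w]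
        have h0 : α ⟨p.2, haN⟩ = 0 := (hαker _).mpr (by
          rw [← hNs2]; exact hNsle2 p.1 hsum hp.2)
        rw [h0, zero_tmul]
      · have hpN : p.2 ∈ N := (hNsN p.1 (hmem p (by simp)).1).1 (hmem p (by simp)).2
        have hp'N : p'.2 ∈ N := (hNsN p'.1 (hmem p' (by simp)).1).1 (hmem p' (by simp)).2
        simp only [List.map_cons, List.prod_cons]
        rw [show p.2 = ((⟨p.2, hpN⟩ : ↥N) : G) from rfl,
          show p'.2 = ((⟨p'.2, hp'N⟩ : ↥N) : G) from rfl,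
          mul_assoc, L1 ⟨p.2, hpN⟩, mul_assoc, L2 ⟨p'.2, hp'N⟩, tmul_zero]
    | zero => intro w; rw [zero_mul, map_zero]
    | add x y _ _ hx hy => intro w; rw [add_mul, map_add, hx, hy, add_zero]
    | smul c x _ hx => intro w; rw [smul_mul_assoc, map_smul, hx, smul_zero]
  -- Ψ kills K3
  have hΨK3 : ∀ v ∈ K3 G N T Ns, Ψ v = 0 := by
    intro v hv
    simp only [K3] at hv
    rw [Submodule.mem_sup] at hv
    obtain ⟨y, hy, z, hz, rfl⟩ := hv
    have hy0 : Ψ y = 0 := by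
      refine Submodule.mul_induction_on hy ?_ ?_
      · intro m hm n _
        exact hΨnI m hm n
      · intro a b ha hb; rw [map_add, ha, hb, add_zero]
    have hz0 : Ψ z = 0 := by
      refine Submodule.mul_induction_on hz ?_ ?_
      · intro m hm n hn
        have hm' := hm
        simp only [relAug] at hm'
        clear hm
        induction hm' using Submodule.span_induction with
        | mem x hx =>
          obtain ⟨n₀, hn₀, rfl⟩ := hx
          rw [show n₀ = ((⟨n₀, hn₀⟩ : ↥N) : G) from rfl, L1 ⟨n₀, hn₀⟩, hβTsq n hn, tmul_zero]
        | zero => rw [zero_mul, map_zero]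
        | add x y _ _ hx hy => rw [add_mul, map_add, hx, hy, add_zero]
        | smul c x _ hx => rw [smul_mul_assoc, map_smul, hx, smul_zero]
      · intro a b ha hb; rw [map_add, ha, hb, add_zero]
    rw [map_add, hy0, hz0, add_zero]
  -- Ψ on the basic products
  have hΨE : ∀ (n : ↥N) (t : ↥T),
      Ψ ((MonoidAlgebra.of ℤ G (n : G) - 1) * (MonoidAlgebra.of ℤ G (t : G) - 1))
        = α n ⊗ₜ[ℤ] β t := by
    intro n t
    rw [L1 n, hβT_relT]
  -- K2 membership of basic products
  have hmem2 : ∀ (n : ↥N) (t : ↥T),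
      (MonoidAlgebra.of ℤ G (n : G) - 1) * (MonoidAlgebra.of ℤ G (t : G) - 1) ∈ K2 G N T :=
    fun n t => Submodule.mul_mem_mul (mem_relAug n.2) (mem_relAug t.2)
  -- the quotient and the class map
  set KK := (K3 G N T Ns).comap (K2 G N T).subtype with hKK
  let E : ↥N → ↥T → ↥(K2 G N T) := fun n t =>
    ⟨(MonoidAlgebra.of ℤ G (n : G) - 1) * (MonoidAlgebra.of ℤ G (t : G) - 1), hmem2 n t⟩
  have hq : ∀ x : ↥(K2 G N T), KK.mkQ x = Submodule.Quotient.mk x := fun _ => rfl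
  have hqeq : ∀ x y : ↥(K2 G N T),
      (x : MonoidAlgebra ℤ G) - (y : MonoidAlgebra ℤ G) ∈ K3 G N T Ns →
      KK.mkQ x = KK.mkQ y := by
    intro x y h
    rw [hq, hq, Submodule.Quotient.eq]
    exact h
  -- membership-in-K3 lemmas
  have hK3_nId : ∀ (v : MonoidAlgebra ℤ G), v ∈ nIdeal G Ns 2 → ∀ (t : ↥T),
      v * (MonoidAlgebra.of ℤ G (t : G) - 1) ∈ K3 G N T Ns := by
    intro v hv t
    exact le_sup_left (a := nIdeal G Ns 2 * relAug G T)
      (b := relAug G N * (relAug G T) ^ 2) (Submodule.mul_mem_mul hv (mem_relAug t.2))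
  have hK3_sq : ∀ (n : ↥N) (y : MonoidAlgebra ℤ G), y ∈ (relAug G T) ^ 2 →
      (MonoidAlgebra.of ℤ G (n : G) - 1) * y ∈ K3 G N T Ns := by
    intro n y hy
    exact le_sup_right (a := nIdeal G Ns 2 * relAug G T)
      (b := relAug G N * (relAug G T) ^ 2) (Submodule.mul_mem_mul (mem_relAug n.2) hy)
  -- the fundamental congruence
  have CONG : ∀ (n n' : ↥N) (t t' : ↥T), α n = α n' → β t = β t' →
      KK.mkQ (E n t) = KK.mkQ (E n' t') := by
    intro n n' t t' hα hβ
    apply hqeq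
    set c : ↥N := n * n'⁻¹ with hc
    set d : ↥T := t * t'⁻¹ with hd
    have hcK : (c : G) ∈ Ns 2 := by
      rw [hNs2]
      refine (hαker c).mp ?_
      rw [hc, hαadd, hαinv, hα]
      abel
    have hdK : (d : G) ∈ ⁅T, T⁆ := by
      refine (hβker d).mp ?_
      rw [hd, hβadd, hβinv, hβ]
      abel
    have hn : (n : G) = (c : G) * (n' : G) := by rw [hc]; push_cast; group
    have ht : (t : G) = (d : G) * (t' : G) := by rw [hd]; push_cast; group
    have key : (E n t : MonoidAlgebra ℤ G) - (E n' t' : MonoidAlgebra ℤ G) =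
        ((MonoidAlgebra.of ℤ G (c : G) - 1) * (MonoidAlgebra.of ℤ G (n' : G) - 1)) *
          (MonoidAlgebra.of ℤ G (t : G) - 1) +
        (MonoidAlgebra.of ℤ G (c : G) - 1) * (MonoidAlgebra.of ℤ G (t : G) - 1) +
        (MonoidAlgebra.of ℤ G (n' : G) - 1) *
          ((MonoidAlgebra.of ℤ G (d : G) - 1) * MonoidAlgebra.of ℤ G (t' : G)) := by
      show (MonoidAlgebra.of ℤ G (n : G) - 1) * (MonoidAlgebra.of ℤ G (t : G) - 1) -
        (MonoidAlgebra.of ℤ G (n' : G) - 1) * (MonoidAlgebra.of ℤ G (t' : G) - 1) = _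
      conv_lhs => rw [hn, ht]
      rw [map_mul, map_mul]
      conv_rhs => rw [ht]
      rw [map_mul]
      noncomm_ring
    rw [key]
    refine add_mem (add_mem ?_ ?_) ?_
    · exact hK3_nId _ (mem_nIdeal_pair (k₁ := 2) (k₂ := 1) one_le_two le_rfl hcK
        (by rw [hNs1]; exact n'.2)) t
    · exact hK3_nId _ (mem_nIdeal_single le_rfl hcK) t
    · exact hK3_sq n' _ (relAug_sq_mul_of (commutator_sub_one_mem_sq T hdK) t'.2)
  -- additivity congruences
  have hADD1 : ∀ (n n' : ↥N) (t : ↥T),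
      KK.mkQ (E (n * n') t) = KK.mkQ (E n t) + KK.mkQ (E n' t) := by
    intro n n' t
    rw [← map_add]
    apply hqeq
    have key : (E (n * n') t : MonoidAlgebra ℤ G) - ((E n t + E n' t : ↥(K2 G N T)) :
        MonoidAlgebra ℤ G) =
        ((MonoidAlgebra.of ℤ G (n : G) - 1) * (MonoidAlgebra.of ℤ G (n' : G) - 1)) *
          (MonoidAlgebra.of ℤ G (t : G) - 1) := by
      show (MonoidAlgebra.of ℤ G ((n : G) * (n' : G)) - 1) *
          (MonoidAlgebra.of ℤ G (t : G) - 1) -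
          ((MonoidAlgebra.of ℤ G (n : G) - 1) * (MonoidAlgebra.of ℤ G (t : G) - 1) +
           (MonoidAlgebra.of ℤ G (n' : G) - 1) * (MonoidAlgebra.of ℤ G (t : G) - 1)) = _
      rw [map_mul]; noncomm_ring
    rw [key]
    exact hK3_nId _ (mem_nIdeal_pair (k₁ := 1) (k₂ := 1) le_rfl le_rfl
      (by rw [hNs1]; exact n.2) (by rw [hNs1]; exact n'.2)) t
  have hADD2 : ∀ (n : ↥N) (t t' : ↥T),
      KK.mkQ (E n (t * t')) = KK.mkQ (E n t) + KK.mkQ (E n t') := by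
    intro n t t'
    rw [← map_add]
    apply hqeq
    have key : (E n (t * t') : MonoidAlgebra ℤ G) - ((E n t + E n t' : ↥(K2 G N T)) :
        MonoidAlgebra ℤ G) =
        (MonoidAlgebra.of ℤ G (n : G) - 1) *
          ((MonoidAlgebra.of ℤ G (t : G) - 1) * (MonoidAlgebra.of ℤ G (t' : G) - 1)) := by
      show (MonoidAlgebra.of ℤ G (n : G) - 1) *
          (MonoidAlgebra.of ℤ G ((t : G) * (t' : G)) - 1) -
          ((MonoidAlgebra.of ℤ G (n : G) - 1) * (MonoidAlgebra.of ℤ G (t : G) - 1) +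
           (MonoidAlgebra.of ℤ G (n : G) - 1) * (MonoidAlgebra.of ℤ G (t' : G) - 1)) = _
      rw [map_mul]; noncomm_ring
    rw [key]
    exact hK3_sq n _ (mul_mem_sq (mem_relAug t.2) (mem_relAug t'.2))
  -- sections of α and β
  obtain ⟨s, hs⟩ := Function.Surjective.hasRightInverse hαsurj
  obtain ⟨σ, hσ⟩ := Function.Surjective.hasRightInverse hβsurj
  -- the bilinear map
  have hF1 : ∀ (a a' : A) (b : Tb), KK.mkQ (E (s (a + a')) (σ b)) =
      KK.mkQ (E (s a) (σ b)) + KK.mkQ (E (s a') (σ b)) := by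
    intro a a' b
    rw [CONG (s (a + a')) (s a * s a') (σ b) (σ b) (by rw [hαadd, hs, hs, hs]) rfl]
    exact hADD1 _ _ _
  have hF2 : ∀ (a : A) (b b' : Tb), KK.mkQ (E (s a) (σ (b + b'))) =
      KK.mkQ (E (s a) (σ b)) + KK.mkQ (E (s a) (σ b')) := by
    intro a b b'
    rw [CONG (s a) (s a) (σ (b + b')) (σ b * σ b') rfl (by rw [hβadd, hσ, hσ, hσ])]
    exact hADD2 _ _ _
  let g2 : A → Tb →+ (↥(K2 G N T) ⧸ KK) := fun a => AddMonoidHom.mk'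
    (fun b => KK.mkQ (E (s a) (σ b))) (fun b b' => hF2 a b b')
  let g1 : A →+ (Tb →+ (↥(K2 G N T) ⧸ KK)) := AddMonoidHom.mk'
    (fun a => g2 a) (by
      intro a a'
      ext b
      exact hF1 a a' b)
  let bil : A →ₗ[ℤ] Tb →ₗ[ℤ] (↥(K2 G N T) ⧸ KK) := LinearMap.mk₂ ℤ
    (fun a b => KK.mkQ (E (s a) (σ b)))
    (fun a a' b => hF1 a a' b)
    (fun z a b => by
      have h := map_zsmul g1 z a
      calc KK.mkQ (E (s (z • a)) (σ b)) = (g1 (z • a)) b := rfl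
        _ = (z • g1 a) b := by rw [h]
        _ = z • ((g1 a) b) := rfl
        _ = z • KK.mkQ (E (s a) (σ b)) := rfl)
    (fun a b b' => hF2 a b b')
    (fun z a b => by
      have h := map_zsmul (g2 a) z b
      calc KK.mkQ (E (s a) (σ (z • b))) = (g2 a) (z • b) := rfl
        _ = z • ((g2 a) b) := by rw [h]
        _ = z • KK.mkQ (E (s a) (σ b)) := rfl)
  let f : A ⊗[ℤ] Tb →ₗ[ℤ] (↥(K2 G N T) ⧸ KK) := TensorProduct.lift bil
  have hftmul : ∀ (a : A) (b : Tb), f (a ⊗ₜ[ℤ] b) = KK.mkQ (E (s a) (σ b)) := by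
    intro a b
    show TensorProduct.lift bil (a ⊗ₜ[ℤ] b) = _
    rw [TensorProduct.lift.tmul]
    rfl
  -- the key property
  have hkey : ∀ (n : ↥N) (t : ↥T)
      (hm : (MonoidAlgebra.of ℤ G (n : G) - 1) * (MonoidAlgebra.of ℤ G (t : G) - 1) ∈
        K2 G N T),
      f (α n ⊗ₜ[ℤ] β t) = Submodule.Quotient.mk
        (⟨(MonoidAlgebra.of ℤ G (n : G) - 1) * (MonoidAlgebra.of ℤ G (t : G) - 1), hm⟩ :
          ↥(K2 G N T)) := by
    intro n t hm
    rw [hftmul, CONG (s (α n)) n (σ (β t)) t (hs (α n)) (hσ (β t))]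
    rfl
  -- the inverse map on the quotient
  have hK3le : KK ≤ LinearMap.ker (Ψ ∘ₗ (K2 G N T).subtype) := by
    intro x hx
    rw [LinearMap.mem_ker]
    exact hΨK3 _ hx
  let Ψ' : (↥(K2 G N T) ⧸ KK) →ₗ[ℤ] A ⊗[ℤ] Tb := KK.liftQ (Ψ ∘ₗ (K2 G N T).subtype) hK3le
  have hΨ'q : ∀ x : ↥(K2 G N T), Ψ' (KK.mkQ x) = Ψ (x : MonoidAlgebra ℤ G) := by
    intro x
    rfl
  -- injectivity
  have hinv : ∀ z : A ⊗[ℤ] Tb, Ψ' (f z) = z := by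
    intro z
    induction z with
    | zero => rw [map_zero, map_zero]
    | tmul a b =>
      rw [hftmul, hΨ'q]
      show Ψ ((MonoidAlgebra.of ℤ G ((s a : ↥N) : G) - 1) *
        (MonoidAlgebra.of ℤ G ((σ b : ↥T) : G) - 1)) = a ⊗ₜ[ℤ] b
      rw [hΨE, hs, hσ]
    | add x y hx hy => rw [map_add, map_add, hx, hy]
  have hinj : Function.Injective f := by
    intro x y hxy
    have h := congrArg Ψ' hxy
    rwa [hinv, hinv] at h
  -- surjectivity
  have hqmk : ∀ (v w : MonoidAlgebra ℤ G) (hvK : v ∈ K2 G N T) (hwK : w ∈ K2 G N T),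
      v = w → KK.mkQ ⟨v, hvK⟩ = KK.mkQ ⟨w, hwK⟩ := by
    rintro v w hv hw rfl; rfl
  have gen : ∀ (m : MonoidAlgebra ℤ G), m ∈ relAug G N →
      ∀ (y : MonoidAlgebra ℤ G), y ∈ relAug G T →
      ∀ (hv : m * y ∈ K2 G N T), KK.mkQ ⟨m * y, hv⟩ ∈ LinearMap.range f := by
    intro m hm
    have hm' := hm
    simp only [relAug] at hm'
    clear hm
    induction hm' using Submodule.span_induction with
    | mem u hu =>
      obtain ⟨n₀, hn₀, rfl⟩ := hu
      intro y hy
      have hy' := hy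
      simp only [relAug] at hy'
      clear hy
      induction hy' using Submodule.span_induction with
      | mem w hw =>
        obtain ⟨t₀, ht₀, rfl⟩ := hw
        intro hv
        refine ⟨α (⟨n₀, hn₀⟩ : ↥N) ⊗ₜ[ℤ] β (⟨t₀, ht₀⟩ : ↥T), ?_⟩
        rw [hkey ⟨n₀, hn₀⟩ ⟨t₀, ht₀⟩ hv]
        rfl
      | zero =>
        intro hv
        rw [hqmk _ 0 hv (Submodule.zero_mem _) (mul_zero _)]
        rw [show ((⟨(0 : MonoidAlgebra ℤ G), Submodule.zero_mem _⟩ : ↥(K2 G N T))) = 0 from rfl,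
          map_zero]
        exact zero_mem _
      | add yv yw hyv hyw ihv ihw =>
        intro hv
        have h1 : (MonoidAlgebra.of ℤ G n₀ - 1) * yv ∈ K2 G N T :=
          Submodule.mul_mem_mul (mem_relAug hn₀) hyv
        have h2 : (MonoidAlgebra.of ℤ G n₀ - 1) * yw ∈ K2 G N T :=
          Submodule.mul_mem_mul (mem_relAug hn₀) hyw
        rw [hqmk _ _ hv (add_mem h1 h2) (mul_add _ _ _),
          show ((⟨_, add_mem h1 h2⟩ : ↥(K2 G N T))) =
            (⟨_, h1⟩ : ↥(K2 G N T)) + (⟨_, h2⟩ : ↥(K2 G N T)) from rfl, map_add]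
        exact add_mem (ihv h1) (ihw h2)
      | smul c yv hyv ih =>
        intro hv
        have h1 : (MonoidAlgebra.of ℤ G n₀ - 1) * yv ∈ K2 G N T :=
          Submodule.mul_mem_mul (mem_relAug hn₀) hyv
        rw [hqmk _ (c • ((MonoidAlgebra.of ℤ G n₀ - 1) * yv)) hv
            (Submodule.smul_mem _ c h1) (mul_smul_comm _ _ _),
          show ((⟨_, Submodule.smul_mem _ c h1⟩ : ↥(K2 G N T))) =
            c • (⟨_, h1⟩ : ↥(K2 G N T)) from rfl, map_smul]
        exact Submodule.smul_mem _ _ (ih h1)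
    | zero =>
      intro y hy hv
      rw [hqmk _ 0 hv (Submodule.zero_mem _) (zero_mul _)]
      rw [show ((⟨(0 : MonoidAlgebra ℤ G), Submodule.zero_mem _⟩ : ↥(K2 G N T))) = 0 from rfl,
        map_zero]
      exact zero_mem _
    | add xv xw hxv hxw ihv ihw =>
      intro y hy hv
      have h1 : xv * y ∈ K2 G N T := Submodule.mul_mem_mul hxv hy
      have h2 : xw * y ∈ K2 G N T := Submodule.mul_mem_mul hxw hy
      rw [hqmk _ _ hv (add_mem h1 h2) (add_mul _ _ _),
        show ((⟨_, add_mem h1 h2⟩ : ↥(K2 G N T))) =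
          (⟨_, h1⟩ : ↥(K2 G N T)) + (⟨_, h2⟩ : ↥(K2 G N T)) from rfl, map_add]
      exact add_mem (ihv y hy h1) (ihw y hy h2)
    | smul c xv hxv ih =>
      intro y hy hv
      have h1 : xv * y ∈ K2 G N T := Submodule.mul_mem_mul hxv hy
      rw [hqmk _ (c • (xv * y)) hv (Submodule.smul_mem _ c h1) (smul_mul_assoc _ _ _),
        show ((⟨_, Submodule.smul_mem _ c h1⟩ : ↥(K2 G N T))) =
          c • (⟨_, h1⟩ : ↥(K2 G N T)) from rfl, map_smul]
      exact Submodule.smul_mem _ _ (ih y hy h1)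
  have hsurj : Function.Surjective f := by
    intro z
    obtain ⟨x, rfl⟩ := Submodule.mkQ_surjective KK z
    have hx2 : (x : MonoidAlgebra ℤ G) ∈ relAug G N * relAug G T := x.2
    have main : ∀ (hv : (x : MonoidAlgebra ℤ G) ∈ K2 G N T),
        KK.mkQ ⟨(x : MonoidAlgebra ℤ G), hv⟩ ∈ LinearMap.range f := by
      refine Submodule.mul_induction_on'
        (C := fun r _ => ∀ (hv : r ∈ K2 G N T), KK.mkQ ⟨r, hv⟩ ∈ LinearMap.range f)
        ?_ ?_ hx2
      · intro m hm n hn hv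
        exact gen m hm n hn hv
      · intro v hv w hw ihv ihw hvw
        rw [show ((⟨v + w, add_mem hv hw⟩ : ↥(K2 G N T))) =
          (⟨v, hv⟩ : ↥(K2 G N T)) + (⟨w, hw⟩ : ↥(K2 G N T)) from rfl, map_add]
        exact add_mem (ihv hv) (ihw hw)
    have h := main x.2
    exact h
  -- assembling the equivalence
  refine ⟨LinearEquiv.ofBijective f ⟨hinj, hsurj⟩, ?_⟩
  intro x t hm
  show f (α x ⊗ₜ[ℤ] β t) = _
  exact hkey x t hm
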